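/- Let A be a commutative ring and let n ≥ 2. Equip the matrix ring Matrix (Fin n) (Fin n) A with the involution given by transpose (the conjugate transpose for the trivial involution on A). Then the A-submodule of Matrix (Fin n) (Fin n) A spanned by the set {P*Q*R - R*Qᵀ*P : P, Q, R ∈ Matrix (Fin n) (Fin n) A} is the whole matrix ring, i.e. Submodule.span A {P*Q*R - R*Qᵀ*P} = ⊤. (This is the key computation showing that hyperoctahedral homology fails to preserve Morita equivalence: the degree-zero hyperoctahedral homology of Matrix (Fin n) (Fin n) A vanishes while that of A is A itself.) -/

import Mathlib

open Matrix

lemma stdBasisMatrix_transpose' {n : ℕ} {A : Type*} [CommRing A] (i j : Fin n) (a : A) :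
    (single i j a)ᵀ = single j i a := by
  ext a b
  simp [single, and_comm]

/-- For `n ≥ 2`, the `A`-submodule of the matrix ring `Matrix (Fin n) (Fin n) A` spanned by
the elements `P*Q*R - R*Qᵀ*P` (the involution being matrix transpose) is the whole
matrix ring.  This is the key computation showing that hyperoctahedral homology fails to
preserve Morita equivalence. -/
theorem matrix_hyperoctahedralRelation_span_eq_top
    (A : Type*) [CommRing A] (n : ℕ) (hn : 2 ≤ n) :
    Submodule.span A
      {X : Matrix (Fin n) (Fin n) A |
        ∃ P Q R : Matrix (Fin n) (Fin n) A, X = P * Q * R - R * Qᵀ * P} = ⊤ := by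
  haveI : Nontrivial (Fin n) := Fin.nontrivial_iff_two_le.mpr hn
  rw [eq_top_iff]
  rintro M -
  rw [matrix_eq_sum_single M]
  refine Submodule.sum_mem _ fun i _ => Submodule.sum_mem _ fun j _ => ?_
  have : single i j (M i j) = M i j • single i j (1 : A) := by
    simp
  rw [this]
  refine Submodule.smul_mem _ _ (Submodule.subset_span ?_)
  obtain ⟨k, hk⟩ := exists_ne i
  refine ⟨single i k 1, single k j 1, single j j 1, ?_⟩
  rw [stdBasisMatrix_transpose']
  rw [single_mul_single_same, single_mul_single_same, single_mul_single_same]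
  rw [single_mul_single_of_ne (1*1) j k i hk 1]
  simp
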